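/- arXiv:2501.13016 — 2 statements merged into one kernel-verified Lean document; each statement's English description precedes it below -/
import Mathlib

section
/- Let q ∈ (0,1], let n ≥ 1 and let i, j, k be nonnegative integers with i + j + k = n. Then the triangular q-Bernstein polynomials satisfy the recurrence B^n_{ijk}(u,v) = u·B^{n-1}_{i-1,j,k}(u,v) + v·B^{n-1}_{i,j-1,k}(u,v) + (q^{i+j} − q^{n−1}u − q^{n−1}v)·B^{n-1}_{i,j,k-1}(u,v) for all real u, v, where by convention B^0_{000}(u,v) = 1 and B^m_{ijk}(u,v) = 0 whenever any of the indices i, j, k is negative. -/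
open Finset

/-- The q-integer [r] = 1 + q + ... + q^(r-1). -/
noncomputable def qInt (q : ℝ) (r : ℕ) : ℝ := ∑ s ∈ Finset.range r, q ^ s

/-- The q-factorial [r]!. -/
noncomputable def qFact (q : ℝ) : ℕ → ℝ
  | 0 => 1
  | r + 1 => qInt q (r + 1) * qFact q r

/-- The q-binomial coefficient [i choose j]_q (zero unless i ≥ j ≥ 0). -/
noncomputable def qBinom (q : ℝ) (i j : ℕ) : ℝ :=
  if j ≤ i then qFact q i / (qFact q j * qFact q (i - j)) else 0

/-- The q-binomial coefficient with integer indices, zero unless i ≥ j ≥ 0. -/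
noncomputable def qBinomZ (q : ℝ) (i j : ℤ) : ℝ :=
  if 0 ≤ j ∧ j ≤ i then qFact q i.toNat / (qFact q j.toNat * qFact q (i - j).toNat) else 0

/-- The triangular q-Bernstein polynomial B^n_{ijk}(u,v)
    (meaningful for i + j + k = n). -/
noncomputable def triB (q : ℝ) (n i j k : ℕ) (u v : ℝ) : ℝ :=
  qBinom q n k * (Nat.choose (i + j) i : ℝ) * u ^ i * v ^ j *
    ∏ s ∈ Finset.range k, (1 - q ^ s * u - q ^ s * v)

/-- The triangular q-Bernstein polynomial with integer indices; by convention it is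
    zero whenever any of the indices is negative. -/
noncomputable def triBZ (q : ℝ) (n : ℕ) (i j k : ℤ) (u v : ℝ) : ℝ :=
  if 0 ≤ i ∧ 0 ≤ j ∧ 0 ≤ k then triB q n i.toNat j.toNat k.toNat u v else 0

/-- The classical triangular Bernstein polynomial b^n_{ijk}(u,v). -/
noncomputable def triBern (n i j k : ℕ) (u v : ℝ) : ℝ :=
  (Nat.factorial n : ℝ) /
      ((Nat.factorial i : ℝ) * (Nat.factorial j : ℝ) * (Nat.factorial k : ℝ)) *
    u ^ i * v ^ j * (1 - u - v) ^ k

/-- The set of triples (i, j, k) of nonnegative integers with i + j + k = n. -/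
def simplex (n : ℕ) : Finset (ℕ × ℕ × ℕ) :=
  (Finset.range (n + 1) ×ˢ Finset.range (n + 1) ×ˢ Finset.range (n + 1)).filter
    (fun p => p.1 + p.2.1 + p.2.2 = n)


lemma qInt_pos {q : ℝ} (hq : 0 < q) {r : ℕ} (hr : 1 ≤ r) : 0 < qInt q r := by
  apply Finset.sum_pos (fun s _ => pow_pos hq s)
  exact Finset.nonempty_range_iff.mpr (by omega)

lemma qFact_pos {q : ℝ} (hq : 0 < q) (r : ℕ) : 0 < qFact q r := by
  induction r with
  | zero => norm_num [qFact]
  | succ r ih => exact mul_pos (qInt_pos hq (by omega)) ih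

lemma qInt_add (q : ℝ) (a b : ℕ) : qInt q (a + b) = qInt q a + q ^ a * qInt q b := by
  simp [qInt, Finset.sum_range_add, Finset.mul_sum, pow_add]

lemma qBinom_self {q : ℝ} (hq : 0 < q) (n : ℕ) : qBinom q n n = 1 := by
  have := (qFact_pos hq n).ne'
  simp [qBinom, qFact]
  exact this

lemma qBinom_zero {q : ℝ} (hq : 0 < q) (n : ℕ) : qBinom q n 0 = 1 := by
  have := (qFact_pos hq n).ne'
  simp [qBinom, qFact]
  exact this

lemma qBinom_pascal {q : ℝ} (hq : 0 < q) {n k : ℕ} (h1 : 1 ≤ k) (h2 : k ≤ n) :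
    qBinom q n k = qBinom q (n - 1) k + q ^ (n - k) * qBinom q (n - 1) (k - 1) := by
  obtain ⟨k', rfl⟩ : ∃ k', k = k' + 1 := ⟨k - 1, by omega⟩
  rcases Nat.lt_or_ge (n - 1) (k' + 1) with h | h
  · have : n = k' + 1 := by omega
    subst this
    rw [qBinom_self hq]
    rw [show k' + 1 - 1 = k' from rfl, show k' + 1 - (k' + 1) = 0 from by omega,
      show qBinom q k' (k' + 1) = 0 from by rw [qBinom, if_neg (by omega)],
      qBinom_self hq]
    ring
  · obtain ⟨m', hm⟩ : ∃ m', n = k' + 1 + (m' + 1) := ⟨n - k' - 2, by omega⟩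
    subst hm
    rw [qBinom, qBinom, qBinom, if_pos (by omega), if_pos (by omega), if_pos (by omega)]
    simp only [show k' + 1 + (m' + 1) - 1 - (k' + 1 - 1) = m' + 1 from by omega,
      show k' + 1 + (m' + 1) - 1 - (k' + 1) = m' from by omega,
      show k' + 1 + (m' + 1) - (k' + 1) = m' + 1 from by omega,
      show k' + 1 + (m' + 1) - 1 = k' + m' + 1 from by omega,
      show k' +  1 + (m' + 1) = k' + m' + 2 from by omega,
      show k' + 1 - 1 = k' from rfl,
      show k' + m' + 2 - (k' + 1) = m' + 1 from by omega,
      show k' + m' + 2 - 1 - (k' + 1) = m' from by omega,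
      show k' + m' + 2 - 1 - k' = m' + 1 from by omega,
      show k' + m' + 2 - 1 = k' + m' + 1 from by omega,
      show k' + m' + 1 - k' = m' + 1 from by omega,
      show k' + m' + 1 - (k' + 1) = m' from by omega]
    have hk := (qFact_pos hq k').ne'
    have hm := (qFact_pos hq m').ne'
    have hik := (qInt_pos hq (show 1 ≤ k' + 1 by omega)).ne'
    have him := (qInt_pos hq (show 1 ≤ m' + 1 by omega)).ne'
    rw [show qFact q (k' + m' + 2) = qInt q (k' + m' + 2) * qFact q (k' + m' + 1) from rfl,
      show qFact q (k' + 1) = qInt q (k' + 1) * qFact q k' from rfl,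
      show qFact q (m' + 1) = qInt q (m' + 1) * qFact q m' from rfl]
    have key : qInt q (k' + m' + 2) = qInt q (m' + 1) + q ^ (m' + 1) * qInt q (k' + 1) := by
      rw [show k' + m' + 2 = (m' + 1) + (k' + 1) by omega, qInt_add]
    rw [key]
    have hfk := (qFact_pos hq (k' + m' + 1)).ne'
    generalize qInt q (k' + 1) = A at hik ⊢
    generalize qInt q (m' + 1) = B at him ⊢
    generalize qFact q k' = F at hk ⊢
    generalize qFact q m' = G at hm ⊢
    generalize qFact q (k' + m' + 1) = H at hfk ⊢
    field_simp

lemma triBZ_coe (q : ℝ) (n : ℕ) (i j k : ℕ) (u v : ℝ) :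
    triBZ q n (i : ℤ) (j : ℤ) (k : ℤ) u v = triB q n i j k u v := by
  simp [triBZ]

lemma cast_sub_one (i : ℕ) : ((i + 1 : ℕ) : ℤ) - 1 = (i : ℤ) := by push_cast; ring

lemma triBZ_negi (q : ℝ) (n : ℕ) (j k : ℤ) (u v : ℝ) : triBZ q n (-1) j k u v = 0 := by
  simp [triBZ]

lemma triBZ_negj (q : ℝ) (n : ℕ) (i k : ℤ) (u v : ℝ) : triBZ q n i (-1) k u v = 0 := by
  simp [triBZ]

lemma triBZ_negk (q : ℝ) (n : ℕ) (i j : ℤ) (u v : ℝ) : triBZ q n i j (-1) u v = 0 := by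
  simp [triBZ]

/-- recurrence for the triangular q-Bernstein polynomials. -/
theorem stmt0 (q : ℝ) (hq0 : 0 < q) (hq1 : q ≤ 1) (n : ℕ) (hn : 1 ≤ n)
    (i j k : ℕ) (hijk : i + j + k = n) (u v : ℝ) :
    triB q n i j k u v =
      u * triBZ q (n - 1) ((i : ℤ) - 1) (j : ℤ) (k : ℤ) u v +
      v * triBZ q (n - 1) (i : ℤ) ((j : ℤ) - 1) (k : ℤ) u v +
      (q ^ (i + j) - q ^ (n - 1) * u - q ^ (n - 1) * v) *
        triBZ q (n - 1) (i : ℤ) (j : ℤ) ((k : ℤ) - 1) u v := by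
  subst hijk
  rcases k with _ | k'
  · -- k = 0
    rw [show ((0 : ℕ) : ℤ) - 1 = -1 from by norm_num, triBZ_negk, mul_zero, add_zero]
    rcases i with _ | i'
    · -- i = 0
      obtain ⟨j', rfl⟩ : ∃ j', j = j' + 1 := ⟨j - 1, by omega⟩
      rw [show ((0 : ℕ) : ℤ) - 1 = -1 from by norm_num, triBZ_negi, mul_zero, zero_add,
        cast_sub_one, triBZ_coe]
      simp only [Nat.zero_add, Nat.add_zero, Nat.add_sub_cancel]
      simp only [triB, Nat.zero_add, Nat.add_zero, Nat.choose_zero_right,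
        Finset.prod_range_zero, qBinom_zero hq0]
      push_cast
      ring
    · rcases j with _ | j'
      · -- j = 0
        rw [show ((0 : ℕ) : ℤ) - 1 = -1 from by norm_num, triBZ_negj, mul_zero, add_zero,
          cast_sub_one, triBZ_coe]
        simp only [Nat.zero_add, Nat.add_zero, Nat.add_sub_cancel]
        simp only [triB, Nat.add_zero, Nat.choose_self, Finset.prod_range_zero,
          qBinom_zero hq0]
        push_cast
        ring
      · -- i, j ≥ 1
        rw [cast_sub_one, cast_sub_one, triBZ_coe, triBZ_coe]
        simp only [show i' + 1 + (j' + 1) - 1 = i' + (j' + 1) from by omega]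
        simp only [triB, Finset.prod_range_zero, qBinom_zero hq0]
        rw [show i' + 1 + (j' + 1) = (i' + (j' + 1)) + 1 from by omega,
          Nat.choose_succ_succ (i' + (j' + 1)) i',
          show i' + 1 + j' = i' + (j' + 1) from by omega]
        push_cast
        ring
  · -- k = k' + 1
    rw [cast_sub_one, triBZ_coe]
    rcases i with _ | i'
    · rcases j with _ | j'
      · -- i = j = 0
        rw [show ((0 : ℕ) : ℤ) - 1 = -1 from by norm_num, triBZ_negi, triBZ_negj,
          mul_zero, mul_zero, zero_add, zero_add]
        simp only [Nat.zero_add, Nat.add_zero, Nat.add_sub_cancel]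
        simp only [triB, Nat.zero_add, Nat.add_zero, Nat.choose_zero_right,
          qBinom_self hq0, Finset.prod_range_succ]
        push_cast
        ring
      · -- i = 0, j ≥ 1
        rw [show ((0 : ℕ) : ℤ) - 1 = -1 from by norm_num, triBZ_negi, mul_zero, zero_add,
          cast_sub_one, triBZ_coe]
        have hn1 : j' + 1 + (k' + 1) - 1 = j' + 1 + k' := by omega
        simp only [hn1]
        simp only [triB, Nat.zero_add, Nat.choose_zero_right, Finset.prod_range_succ]
        rw [qBinom_pascal hq0 (show 1 ≤ k' + 1 by omega)
          (show k' + 1 ≤ j' + 1 + (k' + 1) by omega)]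
        simp only [hn1, show j' + 1 + (k' + 1) - (k' + 1) = j' + 1 from by omega,
          Nat.add_sub_cancel]
        rw [pow_add]
        push_cast
        ring
    · rcases j with _ | j'
      · -- j = 0, i ≥ 1
        rw [show ((0 : ℕ) : ℤ) - 1 = -1 from by norm_num, triBZ_negj, mul_zero, add_zero,
          cast_sub_one, triBZ_coe]
        have hn1 : i' + 1 + (k' + 1) - 1 = i' + 1 + k' := by omega
        simp only [hn1]
        simp only [triB, Nat.add_zero, Nat.choose_self, Finset.prod_range_succ]
        rw [qBinom_pascal hq0 (show 1 ≤ k' + 1 by omega)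
          (show k' + 1 ≤ i' + 1 + (k' + 1) by omega)]
        simp only [hn1, show i' + 1 + (k' + 1) - (k' + 1) = i' + 1 from by omega,
          Nat.add_sub_cancel]
        rw [pow_add]
        push_cast
        ring
      · -- i, j ≥ 1
        rw [cast_sub_one, cast_sub_one, triBZ_coe, triBZ_coe]
        have hn1 : i' + 1 + (j' + 1) + (k' + 1) - 1 = i' + 1 + (j' + 1) + k' := by omega
        simp only [hn1]
        simp only [triB, Finset.prod_range_succ]
        rw [qBinom_pascal hq0 (show 1 ≤ k' + 1 by omega)
          (show k' + 1 ≤ i' + 1 + (j' + 1) + (k' + 1) by omega)]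
        simp only [hn1,
          show i' + 1 + (j' + 1) + (k' + 1) - (k' + 1) = i' + 1 + (j' + 1) from by omega,
          Nat.add_sub_cancel]
        rw [show i' + 1 + (j' + 1) = (i' + (j' + 1)) + 1 from by omega,
          Nat.choose_succ_succ (i' + (j' + 1)) i',
          show i' + 1 + j' = i' + (j' + 1) from by omega,
          show (i' + (j' + 1)) + 1 + k' = (i' + (j' + 1) + 1) + k' from rfl, pow_add]
        push_cast
        ring
end

section
/- Let 0 < q < 1 and let r ≥ 1 be an integer. Then there exist nonnegative real numbers c^r_{ijk} ≥ 0, indexed by nonnegative integers i, j, k with i + j + k = r, such that for all real u, v: ∏_{s=0}^{r−1} (1 − q^s u − q^s v) = Σ_{i+j+k=r} c^r_{ijk} · u^i v^j (1 − u − v)^k. -/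
open Finset

lemma mem_simplex {n : ℕ} {p : ℕ × ℕ × ℕ} : p ∈ simplex n ↔ p.1 + p.2.1 + p.2.2 = n := by
  simp only [simplex, Finset.mem_filter, Finset.mem_product, Finset.mem_range]
  omega

lemma shift1 (n : ℕ) (G : ℕ × ℕ × ℕ → ℝ) (h0 : ∀ p, p.1 = 0 → G p = 0) :
    ∑ p ∈ simplex (n + 1), G p = ∑ p ∈ simplex n, G (p.1 + 1, p.2.1, p.2.2) := by
  have him := Finset.sum_image (s := simplex n) (f := G)
      (g := fun p : ℕ×ℕ×ℕ => (p.1 + 1, p.2.1, p.2.2))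
      (by intro x _ y _ h; simpa [Prod.ext_iff] using h)
  rw [← him]
  refine (Finset.sum_subset ?_ ?_).symm
  · intro x hx
    simp only [Finset.mem_image] at hx
    obtain ⟨y, hy, rfl⟩ := hx
    simp only [mem_simplex] at hy ⊢; omega
  · intro x hx hnx
    rcases Nat.eq_zero_or_pos x.1 with h | h
    · exact h0 x h
    · exfalso; apply hnx
      rw [Finset.mem_image]
      refine ⟨(x.1 - 1, x.2.1, x.2.2), ?_, ?_⟩
      · simp only [mem_simplex] at hx ⊢; omega
      · ext <;> simp <;> omega

lemma shift2 (n : ℕ) (G : ℕ × ℕ × ℕ → ℝ) (h0 : ∀ p, p.2.1 = 0 → G p = 0) :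
    ∑ p ∈ simplex (n + 1), G p = ∑ p ∈ simplex n, G (p.1, p.2.1 + 1, p.2.2) := by
  have him := Finset.sum_image (s := simplex n) (f := G)
      (g := fun p : ℕ×ℕ×ℕ => (p.1, p.2.1 + 1, p.2.2))
      (by intro x _ y _ h; simpa [Prod.ext_iff] using h)
  rw [← him]
  refine (Finset.sum_subset ?_ ?_).symm
  · intro x hx
    simp only [Finset.mem_image] at hx
    obtain ⟨y, hy, rfl⟩ := hx
    simp only [mem_simplex] at hy ⊢; omega
  · intro x hx hnx
    rcases Nat.eq_zero_or_pos x.2.1 with h | h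
    · exact h0 x h
    · exfalso; apply hnx
      rw [Finset.mem_image]
      refine ⟨(x.1, x.2.1 - 1, x.2.2), ?_, ?_⟩
      · simp only [mem_simplex] at hx ⊢; omega
      · ext <;> simp <;> omega

lemma shift3 (n : ℕ) (G : ℕ × ℕ × ℕ → ℝ) (h0 : ∀ p, p.2.2 = 0 → G p = 0) :
    ∑ p ∈ simplex (n + 1), G p = ∑ p ∈ simplex n, G (p.1, p.2.1, p.2.2 + 1) := by
  have him := Finset.sum_image (s := simplex n) (f := G)
      (g := fun p : ℕ×ℕ×ℕ => (p.1, p.2.1, p.2.2 + 1))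
      (by intro x _ y _ h; simpa [Prod.ext_iff] using h)
  rw [← him]
  refine (Finset.sum_subset ?_ ?_).symm
  · intro x hx
    simp only [Finset.mem_image] at hx
    obtain ⟨y, hy, rfl⟩ := hx
    simp only [mem_simplex] at hy ⊢; omega
  · intro x hx hnx
    rcases Nat.eq_zero_or_pos x.2.2 with h | h
    · exact h0 x h
    · exfalso; apply hnx
      rw [Finset.mem_image]
      refine ⟨(x.1, x.2.1, x.2.2 - 1), ?_, ?_⟩
      · simp only [mem_simplex] at hx ⊢; omega
      · ext <;> simp <;> omega

lemma simplex_zero : simplex 0 = {(0, 0, 0)} := by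
  ext p
  simp only [mem_simplex, Finset.mem_singleton, Prod.ext_iff]
  omega

lemma aux (q : ℝ) (hq0 : 0 < q) (hq1 : q < 1) (r : ℕ) :
    ∃ c : ℕ × ℕ × ℕ → ℝ, (∀ p, 0 ≤ c p) ∧
      ∀ u v : ℝ, ∏ s ∈ Finset.range r, (1 - q ^ s * u - q ^ s * v) =
        ∑ p ∈ simplex r, c p * u ^ p.1 * v ^ p.2.1 * (1 - u - v) ^ p.2.2 := by
  induction r with
  | zero =>
    exact ⟨fun _ => 1, fun _ => zero_le_one, fun u v => by simp [simplex_zero]⟩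
  | succ r ih =>
    obtain ⟨c, hc, hsum⟩ := ih
    have hqr : 0 ≤ 1 - q ^ r := by
      have := pow_le_one₀ hq0.le hq1.le (n := r); linarith
    refine ⟨fun p => (1 - q ^ r) * ((if p.1 = 0 then 0 else c (p.1 - 1, p.2.1, p.2.2))
        + (if p.2.1 = 0 then 0 else c (p.1, p.2.1 - 1, p.2.2)))
        + (if p.2.2 = 0 then 0 else c (p.1, p.2.1, p.2.2 - 1)), ?_, ?_⟩
    · intro p
      have h1 : 0 ≤ (if p.1 = 0 then (0:ℝ) else c (p.1 - 1, p.2.1, p.2.2)) := by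
        split <;> simp [hc]
      have h2 : 0 ≤ (if p.2.1 = 0 then (0:ℝ) else c (p.1, p.2.1 - 1, p.2.2)) := by
        split <;> simp [hc]
      have h3 : 0 ≤ (if p.2.2 = 0 then (0:ℝ) else c (p.1, p.2.1, p.2.2 - 1)) := by
        split <;> simp [hc]
      positivity
    · intro u v
      rw [Finset.prod_range_succ, hsum u v]
      have hsplit : ∀ p : ℕ × ℕ × ℕ,
          ((1 - q ^ r) * ((if p.1 = 0 then (0:ℝ) else c (p.1 - 1, p.2.1, p.2.2))
            + (if p.2.1 = 0 then 0 else c (p.1, p.2.1 - 1, p.2.2)))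
            + (if p.2.2 = 0 then 0 else c (p.1, p.2.1, p.2.2 - 1)))
            * u ^ p.1 * v ^ p.2.1 * (1 - u - v) ^ p.2.2
          = (1 - q ^ r) * ((if p.1 = 0 then (0:ℝ) else c (p.1 - 1, p.2.1, p.2.2))
              * u ^ p.1 * v ^ p.2.1 * (1 - u - v) ^ p.2.2)
            + (1 - q ^ r) * ((if p.2.1 = 0 then (0:ℝ) else c (p.1, p.2.1 - 1, p.2.2))
              * u ^ p.1 * v ^ p.2.1 * (1 - u - v) ^ p.2.2)
            + (if p.2.2 = 0 then (0:ℝ) else c (p.1, p.2.1, p.2.2 - 1))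
              * u ^ p.1 * v ^ p.2.1 * (1 - u - v) ^ p.2.2 := by
        intro p; ring
      rw [Finset.sum_congr rfl (fun p _ => hsplit p), Finset.sum_add_distrib,
        Finset.sum_add_distrib, ← Finset.mul_sum, ← Finset.mul_sum]
      rw [shift1 r (fun p => (if p.1 = 0 then (0:ℝ) else c (p.1 - 1, p.2.1, p.2.2))
            * u ^ p.1 * v ^ p.2.1 * (1 - u - v) ^ p.2.2)
          (by intro p hp; simp [hp])]
      rw [shift2 r (fun p => (if p.2.1 = 0 then (0:ℝ) else c (p.1, p.2.1 - 1, p.2.2))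
            * u ^ p.1 * v ^ p.2.1 * (1 - u - v) ^ p.2.2)
          (by intro p hp; simp [hp])]
      rw [shift3 r (fun p => (if p.2.2 = 0 then (0:ℝ) else c (p.1, p.2.1, p.2.2 - 1))
            * u ^ p.1 * v ^ p.2.1 * (1 - u - v) ^ p.2.2)
          (by intro p hp; simp [hp])]
      simp only [Nat.add_sub_cancel, Nat.succ_ne_zero, if_false]
      have step : ∑ p ∈ simplex r,
            c p * u ^ p.1 * v ^ p.2.1 * (1 - u - v) ^ p.2.2 * (1 - q ^ r * u - q ^ r * v)
          = ∑ p ∈ simplex r,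
            ((1 - q ^ r) * (c p * u ^ (p.1 + 1) * v ^ p.2.1 * (1 - u - v) ^ p.2.2)
              + (1 - q ^ r) * (c p * u ^ p.1 * v ^ (p.2.1 + 1) * (1 - u - v) ^ p.2.2)
              + c p * u ^ p.1 * v ^ p.2.1 * (1 - u - v) ^ (p.2.2 + 1)) :=
        Finset.sum_congr rfl (fun p _ => by ring)
      simp only [Prod.mk.eta]
      rw [Finset.sum_mul, step, Finset.sum_add_distrib, Finset.sum_add_distrib, ← Finset.mul_sum,
        ← Finset.mul_sum]


/-- the product ∏ (1 - q^s u - q^s v) has a nonnegative expansion in the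
    classical barycentric monomials u^i v^j (1-u-v)^k with i + j + k = r. -/
theorem stmt9 (q : ℝ) (hq0 : 0 < q) (hq1 : q < 1) (r : ℕ) (hr : 1 ≤ r) :
    ∃ c : ℕ × ℕ × ℕ → ℝ, (∀ p ∈ simplex r, 0 ≤ c p) ∧
      ∀ u v : ℝ,
        ∏ s ∈ Finset.range r, (1 - q ^ s * u - q ^ s * v) =
          ∑ p ∈ simplex r, c p * u ^ p.1 * v ^ p.2.1 * (1 - u - v) ^ p.2.2 := by
  obtain ⟨c, hc, h⟩ := aux q hq0 hq1 r
  exact ⟨c, fun p _ => hc p, h⟩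
end
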